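/- arXiv:1402.3854 — 3 statements merged into one kernel-verified Lean document; each statement's English description precedes it below -/
import Mathlib

section
/- Assume that for every i one has Σ_{j=1}^{N} r_{ij} v_{ij} = −(1/12) Σ_{j=1}^{N} r_{ij} h_i/h_j − 2 C h_i². Then for all i ≠ j, G_{ij}^{(2)} = −( r_{ij} / (5760 h_i h_j) ) · ( θ_{ij} h_j/h_i + θ_{ji} h_i/h_j − 12 r_{ij}² − Σ_{l=1}^{N} ( r_{il} r_{jl} h_i h_j / h_l² − r_{ij} r_{il} h_j / h_l − r_{ij} r_{jl} h_i / h_l ) ) − C r_{ij}² / 120. -/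
private lemma sum_split_two {N : ℕ} (i j : Fin N) (hij : i ≠ j) (f g : Fin N → ℝ)
    (hfg : ∀ k, k ≠ i → k ≠ j → f k = g k) :
    ∑ k, f k = ∑ k, g k + (f i - g i) + (f j - g j) := by
  have h1 : ∑ k ∈ ({i, j} : Finset (Fin N)), (f k - g k) = ∑ k, (f k - g k) := by
    refine Finset.sum_subset (Finset.subset_univ _) ?_
    intro k _ hk
    simp only [Finset.mem_insert, Finset.mem_singleton, not_or] at hk
    rw [hfg k hk.1 hk.2]; ring
  rw [Finset.sum_pair hij] at h1
  rw [Finset.sum_sub_distrib] at h1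
  linarith

set_option maxHeartbeats 1600000 in
/-- Under the genus-1 one-point identity (condition (C2) in canonical
coordinates), the coefficient `G i j` of the genus-2 G-function satisfies
`G i j = -(r i j / (5760 h i h j)) * (θ i j * h j / h i + θ j i * h i / h j
  - 12 r i j ^ 2 - ∑ l, (…)) - C * r i j ^ 2 / 120` for all `i ≠ j`. -/
theorem Gij_formula (N : ℕ) (hN : 2 ≤ N)
    (u : Fin N → ℝ) (hu : Function.Injective u)
    (h : Fin N → ℝ) (hh : ∀ i, h i ≠ 0)
    (C : ℝ)
    (γ : Fin N → Fin N → ℝ) (hγs : ∀ i j, γ i j = γ j i) (hγd : ∀ i, γ i i = 0)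
    (r : Fin N → Fin N → ℝ)
    (hroff : ∀ i j, i ≠ j → r i j = γ i j)
    (hrdiag : ∀ i, r i i = -(∑ j ∈ Finset.univ.erase i, γ i j * h j) / h i)
    (v : Fin N → Fin N → ℝ) (hv : ∀ i j, v i j = (u j - u i) * r i j)
    (θ : Fin N → Fin N → ℝ)
    (hθ : ∀ i j, i ≠ j → θ i j = (u j - u i)⁻¹ * (r i j + ∑ k, r i k * v j k))
    (H : Fin N → ℝ)
    (hH : ∀ i, H i = (1 / 2) * ∑ j ∈ Finset.univ.erase i, (u i - u j) * γ i j ^ 2)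
    (G : Fin N → Fin N → ℝ)
    (hG : ∀ i j, i ≠ j →
      G i j = -(γ i j ^ 2 * H j) / (120 * h j ^ 2)
        + γ i j ^ 3 / (480 * h i * h j)
        - (γ i j / 5760) * ((r i i * r i j + θ i j) / h i ^ 2
            + (r j j * r i j + θ j i) / h j ^ 2)
        + (γ i j ^ 2 / 5760) * ((r i i * h i) / h i ^ 3 + 3 * (r j j * h j) / h j ^ 3)
        + ∑ k, (γ i j * γ i k * γ j k / (5760 * h k ^ 2)
            + (γ i j ^ 2 / (5760 * h k)) * (γ j k / h j - γ i k / h i)))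
    (hC2 : ∀ i, ∑ j, r i j * v i j
      = -(1 / 12) * ∑ j, r i j * h i / h j - 2 * C * h i ^ 2) :
    ∀ i j, i ≠ j →
      G i j = -(r i j / (5760 * h i * h j))
          * (θ i j * h j / h i + θ j i * h i / h j - 12 * r i j ^ 2
            - ∑ l, (r i l * r j l * h i * h j / h l ^ 2
                - r i j * r i l * h j / h l - r i j * r j l * h i / h l))
        - C * r i j ^ 2 / 120 := by
  intro i j hij
  have hhi := hh i
  have hhj := hh j
  have hγij : γ i j = r i j := (hroff i j hij).symm
  have hrji : r j i = r i j := by rw [hroff j i hij.symm, hroff i j hij, hγs]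
  -- Step 1: the value of H j from hC2
  have hHj : H j = 1 / 24 * (∑ k, r j k * h j / h k) + C * h j ^ 2 := by
    have e0 : ∑ k, r j k * v j k = -(2 * H j) := by
      rw [hH j, ← Finset.add_sum_erase _ _ (Finset.mem_univ j)]
      have hvjj : v j j = 0 := by rw [hv]; ring
      rw [hvjj, mul_zero, zero_add]
      have hterm : ∀ k ∈ Finset.univ.erase j, r j k * v j k
          = -((u j - u k) * γ j k ^ 2) := by
        intro k hk
        have hkj : k ≠ j := Finset.ne_of_mem_erase hk
        rw [hv, hroff j k (Ne.symm hkj)]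
        ring
      rw [Finset.sum_congr rfl hterm, Finset.sum_neg_distrib]
      ring
    linear_combination (1 / 2 : ℝ) * e0 - (1 / 2 : ℝ) * hC2 j
  -- Step 2: convert the γ-sum in G to an r-sum
  have eT5 : ∑ k, (γ i j * γ i k * γ j k / (5760 * h k ^ 2)
        + (γ i j ^ 2 / (5760 * h k)) * (γ j k / h j - γ i k / h i))
      = γ i j / 5760 * (∑ k, r i k * r j k / h k ^ 2)
        + γ i j ^ 2 / (5760 * h j) * (∑ k, r j k / h k)
        - γ i j ^ 2 / (5760 * h i) * (∑ k, r i k / h k)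
        - 2 * γ i j ^ 2 * r j j / (5760 * h j ^ 2) := by
    have estep := sum_split_two i j hij
      (fun k => γ i j * γ i k * γ j k / (5760 * h k ^ 2)
        + (γ i j ^ 2 / (5760 * h k)) * (γ j k / h j - γ i k / h i))
      (fun k => γ i j * r i k * r j k / (5760 * h k ^ 2)
        + (γ i j ^ 2 / (5760 * h k)) * (r j k / h j - r i k / h i))
      (by
        intro k hki hkj
        rw [hroff i k (Ne.symm hki), hroff j k (Ne.symm hkj)])
    rw [estep]
    have eFr : ∑ k, (γ i j * r i k * r j k / (5760 * h k ^ 2)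
          + (γ i j ^ 2 / (5760 * h k)) * (r j k / h j - r i k / h i))
        = γ i j / 5760 * (∑ k, r i k * r j k / h k ^ 2)
          + γ i j ^ 2 / (5760 * h j) * (∑ k, r j k / h k)
          - γ i j ^ 2 / (5760 * h i) * (∑ k, r i k / h k) := by
      rw [Finset.mul_sum, Finset.mul_sum, Finset.mul_sum]
      rw [← Finset.sum_add_distrib, ← Finset.sum_sub_distrib]
      refine Finset.sum_congr rfl ?_
      intro k _
      have hhk := hh k
      field_simp
      ring
    rw [eFr]
    simp only [hγd i, hγd j, hγs j i, hrji, hγij]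
    field_simp
    ring
  -- Step 3: split the r-sum on the RHS
  have eRHS : ∑ l, (r i l * r j l * h i * h j / h l ^ 2
        - r i j * r i l * h j / h l - r i j * r j l * h i / h l)
      = h i * h j * (∑ k, r i k * r j k / h k ^ 2)
        - r i j * h j * (∑ k, r i k / h k)
        - r i j * h i * (∑ k, r j k / h k) := by
    rw [Finset.mul_sum, Finset.mul_sum, Finset.mul_sum]
    rw [← Finset.sum_sub_distrib, ← Finset.sum_sub_distrib]
    refine Finset.sum_congr rfl ?_
    intro k _
    have hhk := hh k
    field_simp
  have eSum1 : ∑ k, r j k * h j / h k = h j * ∑ k, r j k / h k := by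
    rw [Finset.mul_sum]
    refine Finset.sum_congr rfl ?_
    intro k _
    ring
  rw [hG i j hij, hHj, eT5, eRHS, eSum1, hγij]
  field_simp
  ring
end

section
/- Assume that for every i one has Σ_{j=1}^{N} r_{ij} v_{ij} = −(1/12) Σ_{j=1}^{N} r_{ij} h_i/h_j − 2 C h_i², and that for all i ≠ j one has θ_{ij} h_j/h_i + θ_{ji} h_i/h_j = 12 r_{ij}² + Σ_{l=1}^{N} ( r_{il} r_{jl} h_i h_j / h_l² − r_{ij} r_{il} h_j / h_l − r_{ij} r_{jl} h_i / h_l ) − 48 C r_{ij} h_i h_j (the two identities expressing condition (C2) in canonical coordinates). Then G_{ij}^{(2)} = 0 for all i ≠ j. -/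
set_option maxHeartbeats 1000000


/-- Under the two identities expressing condition (C2) in canonical
coordinates, the coefficient `G i j` of the genus-2 G-function vanishes for
all `i ≠ j`. -/
theorem Gij_vanishes (N : ℕ) (hN : 2 ≤ N)
    (u : Fin N → ℝ) (hu : Function.Injective u)
    (h : Fin N → ℝ) (hh : ∀ i, h i ≠ 0)
    (C : ℝ)
    (γ : Fin N → Fin N → ℝ) (hγs : ∀ i j, γ i j = γ j i) (hγd : ∀ i, γ i i = 0)
    (r : Fin N → Fin N → ℝ)
    (hroff : ∀ i j, i ≠ j → r i j = γ i j)
    (hrdiag : ∀ i, r i i = -(∑ j ∈ Finset.univ.erase i, γ i j * h j) / h i)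
    (v : Fin N → Fin N → ℝ) (hv : ∀ i j, v i j = (u j - u i) * r i j)
    (θ : Fin N → Fin N → ℝ)
    (hθ : ∀ i j, i ≠ j → θ i j = (u j - u i)⁻¹ * (r i j + ∑ k, r i k * v j k))
    (H : Fin N → ℝ)
    (hH : ∀ i, H i = (1 / 2) * ∑ j ∈ Finset.univ.erase i, (u i - u j) * γ i j ^ 2)
    (G : Fin N → Fin N → ℝ)
    (hG : ∀ i j, i ≠ j →
      G i j = -(γ i j ^ 2 * H j) / (120 * h j ^ 2)
        + γ i j ^ 3 / (480 * h i * h j)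
        - (γ i j / 5760) * ((r i i * r i j + θ i j) / h i ^ 2
            + (r j j * r i j + θ j i) / h j ^ 2)
        + (γ i j ^ 2 / 5760) * ((r i i * h i) / h i ^ 3 + 3 * (r j j * h j) / h j ^ 3)
        + ∑ k, (γ i j * γ i k * γ j k / (5760 * h k ^ 2)
            + (γ i j ^ 2 / (5760 * h k)) * (γ j k / h j - γ i k / h i)))
    (hC2a : ∀ i, ∑ j, r i j * v i j
      = -(1 / 12) * ∑ j, r i j * h i / h j - 2 * C * h i ^ 2)
    (hC2b : ∀ i j, i ≠ j →
      θ i j * h j / h i + θ j i * h i / h j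
        = 12 * r i j ^ 2
          + ∑ l, (r i l * r j l * h i * h j / h l ^ 2
              - r i j * r i l * h j / h l - r i j * r j l * h i / h l)
          - 48 * C * r i j * h i * h j) :
    ∀ i j, i ≠ j → G i j = 0 := by
  intro i j hij
  have hhi := hh i
  have hhj := hh j
  set A : ℝ := ∑ k, r i k / h k with hA
  set B : ℝ := ∑ k, r j k / h k with hB
  set D : ℝ := ∑ k, r i k * r j k / h k ^ 2 with hD
  have hji : j ≠ i := hij.symm
  have hrij : r i j = γ i j := hroff i j hij
  have hrji : r j i = γ i j := (hroff j i hji).trans (hγs j i)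
  -- Step 1 : H j in terms of B
  have hHj : H j = (1 / 24) * (h j * B) + C * h j ^ 2 := by
    have e := hC2a j
    have hz : r j j * v j j = 0 := by rw [hv]; simp
    have s1 : ∑ k, r j k * v j k = ∑ k ∈ Finset.univ.erase j, (u k - u j) * γ j k ^ 2 := by
      rw [← Finset.sum_erase_add _ _ (Finset.mem_univ j), hz, add_zero]
      refine Finset.sum_congr rfl fun k hk => ?_
      rw [hv, hroff j k (Finset.ne_of_mem_erase hk).symm]
      ring
    have s2 : H j = (-(1:ℝ)/2) * ∑ k ∈ Finset.univ.erase j, (u k - u j) * γ j k ^ 2 := by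
      rw [hH j, Finset.mul_sum, Finset.mul_sum]
      refine Finset.sum_congr rfl fun k _ => by ring
    have l1 : ∑ k, r j k * v j k = -2 * H j := by rw [s1, s2]; ring
    have l2 : ∑ k, r j k * h j / h k = h j * B := by
      rw [hB, Finset.mul_sum]
      refine Finset.sum_congr rfl fun k _ => by ring
    rw [l1, l2] at e
    linear_combination (-1/2 : ℝ) * e
  -- Step 2 : the θ combination
  have hsum : ∑ l, (r i l * r j l * h i * h j / h l ^ 2
      - r i j * r i l * h j / h l - r i j * r j l * h i / h l)
      = h i * h j * D - r i j * h j * A - r i j * h i * B := by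
    rw [hD, hA, hB, Finset.mul_sum, Finset.mul_sum, Finset.mul_sum,
      ← Finset.sum_sub_distrib, ← Finset.sum_sub_distrib]
    refine Finset.sum_congr rfl fun k _ => by ring
  have hT : θ i j / h i ^ 2 + θ j i / h j ^ 2
      = (12 * γ i j ^ 2 + h i * h j * D - γ i j * h j * A - γ i j * h i * B
          - 48 * C * γ i j * h i * h j) / (h i * h j) := by
    have e := hC2b i j hij
    rw [hsum, hrij] at e
    have e2 : θ i j / h i ^ 2 + θ j i / h j ^ 2
        = (θ i j * h j / h i + θ j i * h i / h j) / (h i * h j) := by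
      field_simp
    rw [e2, e]
    ring_nf
  -- Step 3 : the γ-sum
  have hSG : ∑ k, (γ i j * γ i k * γ j k / (5760 * h k ^ 2)
        + (γ i j ^ 2 / (5760 * h k)) * (γ j k / h j - γ i k / h i))
      = γ i j / 5760 * D + γ i j ^ 2 / (5760 * h j) * B
        - γ i j ^ 2 / (5760 * h i) * A - 2 * γ i j ^ 2 * r j j / (5760 * h j ^ 2) := by
    have key : ∑ k, ((γ i j * γ i k * γ j k / (5760 * h k ^ 2)
        + (γ i j ^ 2 / (5760 * h k)) * (γ j k / h j - γ i k / h i))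
        - (γ i j * (r i k * r j k) / (5760 * h k ^ 2)
        + (γ i j ^ 2 / (5760 * h k)) * (r j k / h j - r i k / h i)))
        = - 2 * γ i j ^ 2 * r j j / (5760 * h j ^ 2) := by
      rw [← Finset.sum_subset (Finset.subset_univ {i, j})
        (fun k _ hk => ?_)]
      · rw [Finset.sum_pair hij]
        rw [hrij, hrji, hγd i, hγd j, hγs j i]
        field_simp
        ring
      · simp only [Finset.mem_insert, Finset.mem_singleton, not_or] at hk
        rw [hroff i k (Ne.symm hk.1), hroff j k (Ne.symm hk.2), hγs i k, hγs j k]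
        ring
    have expand : ∑ k, (γ i j * (r i k * r j k) / (5760 * h k ^ 2)
        + (γ i j ^ 2 / (5760 * h k)) * (r j k / h j - r i k / h i))
        = γ i j / 5760 * D + γ i j ^ 2 / (5760 * h j) * B - γ i j ^ 2 / (5760 * h i) * A := by
      rw [hD, hA, hB, Finset.mul_sum, Finset.mul_sum, Finset.mul_sum,
        ← Finset.sum_add_distrib, ← Finset.sum_sub_distrib]
      refine Finset.sum_congr rfl fun k _ => by ring
    rw [Finset.sum_sub_distrib, expand] at key
    linear_combination key
  -- Conclusion
  rw [hG i j hij, hrij, hHj, hSG]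
  have comb : r i i * γ i j / h i ^ 2 + θ i j / h i ^ 2
        + (r j j * γ i j / h j ^ 2 + θ j i / h j ^ 2)
      = r i i * γ i j / h i ^ 2 + r j j * γ i j / h j ^ 2
        + (12 * γ i j ^ 2 + h i * h j * D - γ i j * h j * A - γ i j * h i * B
          - 48 * C * γ i j * h i * h j) / (h i * h j) := by
    rw [← hT]; ring
  have e3 : (r i i * γ i j + θ i j) / h i ^ 2 + (r j j * γ i j + θ j i) / h j ^ 2
      = r i i * γ i j / h i ^ 2 + r j j * γ i j / h j ^ 2
        + (12 * γ i j ^ 2 + h i * h j * D - γ i j * h j * A - γ i j * h i * B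
          - 48 * C * γ i j * h i * h j) / (h i * h j) := by
    rw [← comb]; ring
  rw [e3]
  field_simp
  ring
end

section
/- Define, for every i, φ_i := (1/24) ( −12 Σ_{j=1}^{N} r_{ij} v_{ij} − Σ_{j=1}^{N} (h_i/h_j) r_{ij} ) (the genus-1 one-point function), and, for i ≠ j, φ_{ij} := (1/24) ( 12 r_{ij}² + Σ_{l=1}^{N} ( r_{il} r_{jl} h_i h_j / h_l² − r_{ij} r_{il} h_j / h_l − r_{ij} r_{jl} h_i / h_l ) − ( θ_{ij} h_j/h_i + θ_{ji} h_i/h_j ) − 24 r_{ij} ( (h_j/h_i) φ_i + (h_i/h_j) φ_j ) ) (the genus-1 two-point function). Then, without any further hypotheses, for all i ≠ j one has G_{ij}^{(2)} = ( r_{ij} / (240 h_i h_j) ) φ_{ij} + ( r_{ij}² / 240 ) ( φ_i / h_i² − φ_j / h_j² ). -/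
set_option maxHeartbeats 2000000 in
/-- Without any further hypotheses, the coefficient `G i j` of the genus-2
G-function equals
`(r i j / (240 h i h j)) * φ2 i j + (r i j ^ 2 / 240) * (φ i / h i ^ 2 - φ j / h j ^ 2)`
for all `i ≠ j`, where `φ` is the genus-1 one-point function and `φ2` the
genus-1 two-point function. -/
theorem Gij_genus1_expression (N : ℕ) (hN : 2 ≤ N)
    (u : Fin N → ℝ) (hu : Function.Injective u)
    (h : Fin N → ℝ) (hh : ∀ i, h i ≠ 0)
    (γ : Fin N → Fin N → ℝ) (hγs : ∀ i j, γ i j = γ j i) (hγd : ∀ i, γ i i = 0)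
    (r : Fin N → Fin N → ℝ)
    (hroff : ∀ i j, i ≠ j → r i j = γ i j)
    (hrdiag : ∀ i, r i i = -(∑ j ∈ Finset.univ.erase i, γ i j * h j) / h i)
    (v : Fin N → Fin N → ℝ) (hv : ∀ i j, v i j = (u j - u i) * r i j)
    (θ : Fin N → Fin N → ℝ)
    (hθ : ∀ i j, i ≠ j → θ i j = (u j - u i)⁻¹ * (r i j + ∑ k, r i k * v j k))
    (H : Fin N → ℝ)
    (hH : ∀ i, H i = (1 / 2) * ∑ j ∈ Finset.univ.erase i, (u i - u j) * γ i j ^ 2)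
    (G : Fin N → Fin N → ℝ)
    (hG : ∀ i j, i ≠ j →
      G i j = -(γ i j ^ 2 * H j) / (120 * h j ^ 2)
        + γ i j ^ 3 / (480 * h i * h j)
        - (γ i j / 5760) * ((r i i * r i j + θ i j) / h i ^ 2
            + (r j j * r i j + θ j i) / h j ^ 2)
        + (γ i j ^ 2 / 5760) * ((r i i * h i) / h i ^ 3 + 3 * (r j j * h j) / h j ^ 3)
        + ∑ k, (γ i j * γ i k * γ j k / (5760 * h k ^ 2)
            + (γ i j ^ 2 / (5760 * h k)) * (γ j k / h j - γ i k / h i)))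
    (φ : Fin N → ℝ)
    (hφ : ∀ i, φ i = (1 / 24) * (-12 * ∑ j, r i j * v i j
      - ∑ j, (h i / h j) * r i j))
    (φ2 : Fin N → Fin N → ℝ)
    (hφ2 : ∀ i j, i ≠ j →
      φ2 i j = (1 / 24) * (12 * r i j ^ 2
        + ∑ l, (r i l * r j l * h i * h j / h l ^ 2
            - r i j * r i l * h j / h l - r i j * r j l * h i / h l)
        - (θ i j * h j / h i + θ j i * h i / h j)
        - 24 * r i j * ((h j / h i) * φ i + (h i / h j) * φ j))) :
    ∀ i j, i ≠ j →
      G i j = (r i j / (240 * h i * h j)) * φ2 i j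
        + (r i j ^ 2 / 240) * (φ i / h i ^ 2 - φ j / h j ^ 2) := by
  intro i j hij
  have hi : h i ≠ 0 := hh i
  have hj : h j ≠ 0 := hh j
  have hγij : γ i j = r i j := (hroff i j hij).symm
  have hγji : γ j i = r i j := by rw [hγs j i, ← hroff i j hij]
  have hrji : r j i = r i j := by rw [hroff j i hij.symm, hγji]
  -- The genus-1 one-point sum for j relates to H j
  have hHsum : ∑ k, r j k * v j k = -2 * H j := by
    rw [hH j, ← Finset.add_sum_erase _ (fun k => r j k * v j k) (Finset.mem_univ j), hv j j]
    have e1 : ∀ k ∈ Finset.univ.erase j, r j k * v j k = -((u j - u k) * γ j k ^ 2) := by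
      intro k hk
      have hkj : j ≠ k := (Finset.ne_of_mem_erase hk).symm
      rw [hv j k, hroff j k hkj]; ring
    rw [Finset.sum_congr rfl e1, Finset.sum_neg_distrib]
    ring
  -- Key rewriting of the k-sum in G in terms of the l-sum in φ2
  have key0 : ∑ k, ((γ i j * γ i k * γ j k / (5760 * h k ^ 2)
        + γ i j ^ 2 / (5760 * h k) * (γ j k / h j - γ i k / h i))
      - r i j / (5760 * h i * h j) * (r i k * r j k * h i * h j / h k ^ 2
            - r i j * r i k * h j / h k - r i j * r j k * h i / h k)
        - r i j ^ 2 / (2880 * h j ^ 2) * (h j / h k * r j k))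
      = -(r i j ^ 2 * r j j / (2880 * h j ^ 2)) := by
    rw [Finset.sum_eq_single_of_mem j (Finset.mem_univ j)]
    · rw [hγd j, hγij]
      field_simp
      ring
    · intro k _ hkj
      by_cases hki : k = i
      · rw [hki, hγd i, hγji, hγij, hrji]
        field_simp
        ring
      · rw [← hroff i k (fun hx => hki hx.symm), ← hroff j k (fun hx => hkj hx.symm), hγij]
        have hk : h k ≠ 0 := hh k
        field_simp
        ring
  rw [Finset.sum_sub_distrib, Finset.sum_sub_distrib, ← Finset.mul_sum, ← Finset.mul_sum]
    at key0
  have key : ∑ k, (γ i j * γ i k * γ j k / (5760 * h k ^ 2)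
        + γ i j ^ 2 / (5760 * h k) * (γ j k / h j - γ i k / h i))
      = r i j / (5760 * h i * h j) * ∑ k, (r i k * r j k * h i * h j / h k ^ 2
            - r i j * r i k * h j / h k - r i j * r j k * h i / h k)
        + r i j ^ 2 / (2880 * h j ^ 2) * ∑ k, (h j / h k * r j k)
        - r i j ^ 2 * r j j / (2880 * h j ^ 2) := by linarith
  rw [hG i j hij, hφ2 i j hij, hφ i, hφ j, key, hγij, hHsum]
  field_simp
  ring
end
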